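/- MIMO numerator formula (equations (151)–(156)). Let A ∈ ℝ^{n×n}, B ∈ ℝ^{n×m}, C ∈ ℝ^{p×n}, and let Δ(s) = Σ_{j=0}^{n} α_j s^j (α_n = 1) be the characteristic polynomial of A. Then over ℝ(s): Δ(s) · C (sI − A)⁻¹ B = Σ_{k=1}^{n} ( Σ_{j=k}^{n} α_j s^{j−k} ) · (C A^{k−1} B), i.e. the transfer function equals m(s)/Δ(s) where m(s) is the p×m polynomial matrix Σ_{k=1}^{n} ( Σ_{j=k}^{n} α_j s^{j−k} ) C A^{k−1} B. -/

import Mathlib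

noncomputable section
set_option synthInstance.maxHeartbeats 1000000
set_option maxHeartbeats 2000000
open Matrix Polynomial

/-- Entrywise embedding of a real matrix into matrices over the field ℝ(s). -/
noncomputable def toRat {k l : ℕ} (M : Matrix (Fin k) (Fin l) ℝ) :
    Matrix (Fin k) (Fin l) (RatFunc ℝ) :=
  M.map (algebraMap ℝ (RatFunc ℝ))

/-- The matrix `s I - M` over ℝ(s). -/
noncomputable def sIm {k : ℕ} (M : Matrix (Fin k) (Fin k) ℝ) :
    Matrix (Fin k) (Fin k) (RatFunc ℝ) :=
  Matrix.scalar (Fin k) (RatFunc.X : RatFunc ℝ) - toRat M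

lemma toRat_mul {k l o : ℕ} (M : Matrix (Fin k) (Fin l) ℝ) (N : Matrix (Fin l) (Fin o) ℝ) :
    toRat (M * N) = toRat M * toRat N :=
  Matrix.map_mul

lemma toRat_one {k : ℕ} : toRat (1 : Matrix (Fin k) (Fin k) ℝ) = 1 :=
  Matrix.map_one _ (map_zero _) (map_one _)

lemma toRat_pow {k : ℕ} (M : Matrix (Fin k) (Fin k) ℝ) (i : ℕ) :
    toRat (M ^ i) = toRat M ^ i := by
  induction i with
  | zero => simpa using toRat_one
  | succ i ih => rw [pow_succ, pow_succ, toRat_mul, ih]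

lemma toRat_smul {k l : ℕ} (c : ℝ) (M : Matrix (Fin k) (Fin l) ℝ) :
    toRat (c • M) = algebraMap ℝ (RatFunc ℝ) c • toRat M := by
  ext i j
  simp [toRat, Matrix.map_apply, smul_eq_mul]

lemma toRat_sum {k l : ℕ} (s : Finset ℕ) (g : ℕ → Matrix (Fin k) (Fin l) ℝ) :
    toRat (∑ i ∈ s, g i) = ∑ i ∈ s, toRat (g i) := by
  ext a b
  simp [toRat, Matrix.map_apply, Matrix.sum_apply]

/-- MIMO numerator formula (equations (151)–(156)): with `Δ(s) = Σ αⱼ sʲ` the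
characteristic polynomial of `A`,
`Δ(s) · C (sI - A)⁻¹ B = Σ_{k=1}^{n} (Σ_{j=k}^{n} αⱼ s^{j-k}) (C A^{k-1} B)`,
i.e. the transfer function equals `m(s)/Δ(s)`. -/
theorem mimo_numerator_formula
    (n m p : ℕ) (A : Matrix (Fin n) (Fin n) ℝ) (B : Matrix (Fin n) (Fin m) ℝ)
    (C : Matrix (Fin p) (Fin n) ℝ) :
    (algebraMap (Polynomial ℝ) (RatFunc ℝ) A.charpoly) •
        (toRat C * (sIm A)⁻¹ * toRat B) =
      ∑ k ∈ Finset.Icc 1 n,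
        (∑ j ∈ Finset.Icc k n,
            algebraMap ℝ (RatFunc ℝ) (A.charpoly.coeff j) * (RatFunc.X : RatFunc ℝ) ^ (j - k)) •
          toRat (C * A ^ (k - 1) * B) := by
  set f := algebraMap ℝ (RatFunc ℝ) with hf
  set α : ℕ → RatFunc ℝ := fun j => f (A.charpoly.coeff j) with hα
  set q : ℕ → RatFunc ℝ := fun k => ∑ j ∈ Finset.range (n + 1 - k), α (k + j) * RatFunc.X ^ j
    with hqdef
  set Ar := toRat A with hAr
  have hdeg : A.charpoly.natDegree = n := by
    simp [A.charpoly_natDegree_eq_dim]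
  -- coefficient identity for each k
  have hcoeff : ∀ k : ℕ,
      (∑ j ∈ Finset.Icc k n, α j * (RatFunc.X : RatFunc ℝ) ^ (j - k)) = q k := by
    intro k
    rw [← Finset.Ico_add_one_right_eq_Icc, Finset.sum_Ico_eq_sum_range]
    apply Finset.sum_congr rfl
    intro j _
    rw [Nat.add_sub_cancel_left]
  -- q n = 1
  have hcn : A.charpoly.coeff n = 1 := by
    have h := (A.charpoly_monic).coeff_natDegree
    rwa [hdeg] at h
  have hqn : q n = 1 := by
    simp only [hqdef]
    rw [show n + 1 - n = 1 from by omega, Finset.sum_range_one]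
    simp [hα, hcn]
  -- recursion
  have hq : ∀ i, i < n → q i = α i + RatFunc.X * q (i + 1) := by
    intro i hi
    have h1 : n + 1 - i = (n - i) + 1 := by omega
    have h2 : n + 1 - (i + 1) = n - i := by omega
    rw [hqdef]
    simp only [h1, h2, Finset.sum_range_succ', Finset.mul_sum]
    rw [add_comm]
    congr 1
    · simp
    · apply Finset.sum_congr rfl
      intro j _
      rw [show i + (j + 1) = i + 1 + j by omega]
      ring
  -- Cayley–Hamilton over RatFunc
  have hCH : ∑ i ∈ Finset.range (n + 1), α i • Ar ^ i = 0 := by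
    have h0 := A.aeval_self_charpoly
    rw [aeval_eq_sum_range, hdeg] at h0
    have h1 := congrArg toRat h0
    rw [toRat_sum] at h1
    simp only [toRat_smul, toRat_pow] at h1
    simpa [toRat, hα, hAr, hf] using h1
  -- the numerator matrix
  set N : Matrix (Fin n) (Fin n) (RatFunc ℝ) := ∑ i ∈ Finset.range n, q (i + 1) • Ar ^ i
    with hNdef
  -- key identity
  have key : sIm A * N = q 0 • 1 := by
    have hsIm : sIm A = (RatFunc.X : RatFunc ℝ) • 1 - Ar := by
      rw [sIm, Matrix.scalar_apply, Matrix.smul_one_eq_diagonal]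
    rw [hsIm, sub_mul, hNdef, Finset.mul_sum, Finset.mul_sum]
    have e1 : ∀ i ∈ Finset.range n,
        ((RatFunc.X : RatFunc ℝ) • 1) * (q (i + 1) • Ar ^ i)
          = (RatFunc.X * q (i + 1)) • Ar ^ i := by
      intro i _
      rw [Matrix.smul_mul, Matrix.mul_smul, smul_smul, one_mul]
    have e2 : ∀ i ∈ Finset.range n,
        Ar * (q (i + 1) • Ar ^ i) = q (i + 1) • Ar ^ (i + 1) := by
      intro i _
      rw [Matrix.mul_smul, ← pow_succ']
    rw [Finset.sum_congr rfl e1, Finset.sum_congr rfl e2]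
    have e3 : ∀ i ∈ Finset.range n,
        (RatFunc.X * q (i + 1)) • Ar ^ i = q i • Ar ^ i - α i • Ar ^ i := by
      intro i hi
      rw [Finset.mem_range] at hi
      rw [hq i hi]
      rw [← sub_smul]
      ring_nf
    rw [Finset.sum_congr rfl e3, Finset.sum_sub_distrib]
    have tele : (∑ i ∈ Finset.range n, q i • Ar ^ i)
        - ∑ i ∈ Finset.range n, q (i + 1) • Ar ^ (i + 1)
        = q 0 • Ar ^ 0 - q n • Ar ^ n := by
      have hA : ∑ i ∈ Finset.range n, q i • Ar ^ i
          = (∑ i ∈ Finset.range (n + 1), q i • Ar ^ i) - q n • Ar ^ n := by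
        rw [Finset.sum_range_succ]; abel
      have hB : ∑ i ∈ Finset.range n, q (i + 1) • Ar ^ (i + 1)
          = (∑ i ∈ Finset.range (n + 1), q i • Ar ^ i) - q 0 • Ar ^ 0 := by
        rw [Finset.sum_range_succ']; abel
      rw [hA, hB]; abel
    have hαn : α n = 1 := by simp [hα, hcn]
    have hch' : ∑ i ∈ Finset.range n, α i • Ar ^ i = -(Ar ^ n) := by
      have h := hCH
      rw [Finset.sum_range_succ, hαn, one_smul] at h
      exact eq_neg_of_add_eq_zero_left h
    have tele' := tele
    rw [hqn, one_smul, pow_zero] at tele'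
    calc (∑ i ∈ Finset.range n, q i • Ar ^ i - ∑ i ∈ Finset.range n, α i • Ar ^ i)
          - ∑ i ∈ Finset.range n, q (i + 1) • Ar ^ (i + 1)
        = (∑ i ∈ Finset.range n, q i • Ar ^ i - ∑ i ∈ Finset.range n, q (i + 1) • Ar ^ (i + 1))
          - ∑ i ∈ Finset.range n, α i • Ar ^ i := by abel
      _ = (q 0 • 1 - Ar ^ n) - (-(Ar ^ n)) := by rw [tele', hch']
      _ = q 0 • 1 := by abel
  -- determinant of sIm A
  have hdet_eq : (sIm A).det = algebraMap (Polynomial ℝ) (RatFunc ℝ) A.charpoly := by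
    rw [Matrix.charpoly, RingHom.map_det]
    congr 1
    ext i j
    by_cases h : i = j <;>
      simp [RingHom.mapMatrix_apply, Matrix.map_apply, Matrix.charmatrix_apply, sIm, toRat,
        Matrix.sub_apply, Matrix.scalar_apply, Matrix.diagonal_apply, h,
        RatFunc.algebraMap_X, RatFunc.algebraMap_C, RatFunc.algebraMap_eq_C]
  have hdet : IsUnit (sIm A).det := by
    rw [hdet_eq, isUnit_iff_ne_zero]
    intro h
    exact (A.charpoly_monic).ne_zero
      (RatFunc.algebraMap_injective ℝ (by simpa using h))
  -- Δ = q 0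
  have hq0 : algebraMap (Polynomial ℝ) (RatFunc ℝ) A.charpoly = q 0 := by
    conv_lhs => rw [A.charpoly.as_sum_range' (n + 1) (by rw [hdeg]; exact Nat.lt_succ_self n)]
    rw [map_sum, hqdef]
    simp only [Nat.sub_zero, zero_add]
    apply Finset.sum_congr rfl
    intro i _
    rw [← C_mul_X_pow_eq_monomial, _root_.map_mul, map_pow, RatFunc.algebraMap_C,
      RatFunc.algebraMap_X, hα, hf, RatFunc.algebraMap_eq_C]
  -- N = Δ • (sIm A)⁻¹
  have hN : N = q 0 • (sIm A)⁻¹ := by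
    calc N = 1 * N := (one_mul N).symm
      _ = ((sIm A)⁻¹ * sIm A) * N := by rw [Matrix.nonsing_inv_mul _ hdet]
      _ = (sIm A)⁻¹ * (sIm A * N) := by rw [mul_assoc]
      _ = (sIm A)⁻¹ * (q 0 • 1) := by rw [key]
      _ = q 0 • (sIm A)⁻¹ := by rw [Matrix.mul_smul, mul_one]
  -- assemble
  have hRHS : ∀ k ∈ Finset.Icc 1 n,
      (∑ j ∈ Finset.Icc k n, α j * (RatFunc.X : RatFunc ℝ) ^ (j - k)) •
          toRat (C * A ^ (k - 1) * B)
        = q k • (toRat C * Ar ^ (k - 1) * toRat B) := by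
    intro k _
    rw [hcoeff, toRat_mul, toRat_mul, toRat_pow]
  rw [Finset.sum_congr rfl hRHS, hq0]
  have hsum : ∑ k ∈ Finset.Icc 1 n, q k • (toRat C * Ar ^ (k - 1) * toRat B)
      = toRat C * N * toRat B := by
    rw [hNdef, Matrix.mul_sum, Matrix.sum_mul, ← Finset.Ico_add_one_right_eq_Icc, Finset.sum_Ico_eq_sum_range]
    apply Finset.sum_congr (by rw [Nat.add_sub_cancel])
    intro i _
    rw [Matrix.mul_smul, Matrix.smul_mul, show 1 + i - 1 = i from by omega, Nat.add_comm 1 i]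
  rw [hsum, hN, Matrix.mul_smul, Matrix.smul_mul]
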